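/- Let α ∈ (0,1), let t ≥ 0 and 0 ≤ a ≤ b be real numbers, and set η := min(max(t, a), b). Then ∫_a^b (α^(max(s,t)+s+t) − (1/3)·α^(3·max(s,t))) ds = ((α^η − α^a) / ln α) · α^(2t) + ((α^(2b) − α^(2η)) / (2 ln α)) · α^t − (1/3)·(η − a)·α^(3t) − (α^(3b) − α^(3η)) / (9 ln α). -/

import Mathlib

open Real intervalIntegral

private lemma aux_exp_int (α : ℝ) (hα : 0 < α) (hα1 : α < 1) (c : ℝ) (hc : c ≠ 0)
    (d u v : ℝ) :
    ∫ s in u..v, α ^ (c * s + d) = (α ^ (c * v + d) - α ^ (c * u + d)) / (c * Real.log α) := by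
  have hL : Real.log α ≠ 0 := (Real.log_neg hα hα1).ne
  have hxe : ∀ x : ℝ, α ^ x = Real.exp (x * Real.log α) := fun x => by
    rw [Real.rpow_def_of_pos hα, mul_comm]
  have hderiv : ∀ s : ℝ, HasDerivAt (fun x => α ^ (c * x + d) / (c * Real.log α))
      (α ^ (c * s + d)) s := by
    intro s
    have h1 : HasDerivAt (fun x : ℝ => (c * x + d) * Real.log α) (c * Real.log α) s := by
      simpa using (((hasDerivAt_id s).const_mul c).add_const d).mul_const (Real.log α)
    have h2 := (Real.hasDerivAt_exp ((c * s + d) * Real.log α)).comp s h1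
    have h3 := h2.div_const (c * Real.log α)
    have hne : c * Real.log α ≠ 0 := mul_ne_zero hc hL
    simp only [Function.comp_def] at h3
    simpa [hxe, mul_div_assoc, div_self hne] using h3
  have hcont : Continuous fun s : ℝ => α ^ (c * s + d) := by
    simp only [hxe]
    fun_prop
  rw [intervalIntegral.integral_eq_sub_of_hasDerivAt (fun s _ => hderiv s)
    (hcont.intervalIntegrable u v)]
  ring

private lemma int1 (α : ℝ) (hα : 0 < α) (hα1 : α < 1) (t u v : ℝ) :
    ∫ s in u..v, (α ^ (s + 2 * t) - 1/3 * α ^ (3 * t)) =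
      ((α ^ v - α ^ u) / Real.log α) * α ^ (2 * t) - 1/3 * (v - u) * α ^ (3 * t) := by
  have h1 : ∀ x : ℝ, α ^ (x + 2 * t) = α ^ ((1:ℝ) * x + 2 * t) := fun x => by norm_num
  have hcont : Continuous fun s : ℝ => α ^ (s + 2 * t) := by
    have hxe : ∀ x : ℝ, α ^ x = Real.exp (x * Real.log α) := fun x => by
      rw [Real.rpow_def_of_pos hα, mul_comm]
    simp only [hxe]; fun_prop
  rw [intervalIntegral.integral_sub (hcont.intervalIntegrable u v)
    (intervalIntegrable_const), intervalIntegral.integral_const]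
  have := aux_exp_int α hα hα1 1 one_ne_zero (2 * t) u v
  simp only [one_mul] at this
  rw [this]
  rw [Real.rpow_add hα v (2*t), Real.rpow_add hα u (2*t)]
  ring_nf

private lemma int2 (α : ℝ) (hα : 0 < α) (hα1 : α < 1) (t u v : ℝ) :
    ∫ s in u..v, (α ^ (2 * s + t) - 1/3 * α ^ (3 * s)) =
      ((α ^ (2 * v) - α ^ (2 * u)) / (2 * Real.log α)) * α ^ t -
        (α ^ (3 * v) - α ^ (3 * u)) / (9 * Real.log α) := by
  have hxe : ∀ x : ℝ, α ^ x = Real.exp (x * Real.log α) := fun x => by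
    rw [Real.rpow_def_of_pos hα, mul_comm]
  have hc1 : Continuous fun s : ℝ => α ^ (2 * s + t) := by simp only [hxe]; fun_prop
  have hc2 : Continuous fun s : ℝ => (1:ℝ)/3 * α ^ (3 * s) := by simp only [hxe]; fun_prop
  rw [intervalIntegral.integral_sub (hc1.intervalIntegrable u v) (hc2.intervalIntegrable u v),
    intervalIntegral.integral_const_mul]
  have h2 := aux_exp_int α hα hα1 2 two_ne_zero t u v
  have h3 := aux_exp_int α hα hα1 3 three_ne_zero 0 u v
  simp only [add_zero] at h3
  rw [h2, h3, Real.rpow_add hα (2*v) t, Real.rpow_add hα (2*u) t]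
  have hL : Real.log α ≠ 0 := (Real.log_neg hα hα1).ne
  field_simp
  ring

/-- For the stable-spline kernel, with `η = min(max(t,a), b)`,
`∫_a^b (α^(max(s,t)+s+t) − (1/3)α^(3 max(s,t))) ds
  = ((α^η − α^a)/ln α)·α^(2t) + ((α^(2b) − α^(2η))/(2 ln α))·α^t
    − (1/3)(η − a)·α^(3t) − (α^(3b) − α^(3η))/(9 ln α)`. -/
theorem psi_SS
    (α : ℝ) (hα : α ∈ Set.Ioo (0 : ℝ) 1)
    (t a b : ℝ) (ht : 0 ≤ t) (ha : 0 ≤ a) (hab : a ≤ b) :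
    ∫ s in a..b, (α ^ (max s t + s + t) - (1/3) * α ^ (3 * max s t)) =
      ((α ^ min (max t a) b - α ^ a) / Real.log α) * α ^ (2 * t) +
        ((α ^ (2 * b) - α ^ (2 * min (max t a) b)) / (2 * Real.log α)) * α ^ t -
        (1/3) * (min (max t a) b - a) * α ^ (3 * t) -
        (α ^ (3 * b) - α ^ (3 * min (max t a) b)) / (9 * Real.log α) := by
  obtain ⟨hα0, hα1⟩ := hα
  have hxe : ∀ x : ℝ, α ^ x = Real.exp (x * Real.log α) := fun x => by
    rw [Real.rpow_def_of_pos hα0, mul_comm]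
  rcases le_or_gt t a with hta | hat
  · -- η = a; on [a,b], max s t = s
    have hη : min (max t a) b = a := by rw [max_eq_right hta, min_eq_left hab]
    rw [hη]
    have hcong : Set.EqOn (fun s => α ^ (max s t + s + t) - (1/3) * α ^ (3 * max s t))
        (fun s => α ^ (2 * s + t) - 1/3 * α ^ (3 * s)) (Set.uIcc a b) := by
      intro s hs
      rw [Set.uIcc_of_le hab] at hs
      have : max s t = s := max_eq_left (hta.trans hs.1)
      simp only [this]
      have h : s + s + t = 2 * s + t := by ring
      rw [h]
    rw [intervalIntegral.integral_congr hcong, int2 α hα0 hα1 t a b]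
    ring
  · rcases le_total t b with htb | hbt
    · -- a ≤ t ≤ b; η = t
      have hη : min (max t a) b = t := by rw [max_eq_left hat.le, min_eq_left htb]
      rw [hη]
      have hcont : Continuous fun s : ℝ =>
          α ^ (max s t + s + t) - (1/3) * α ^ (3 * max s t) := by
        simp only [hxe]
        fun_prop
      rw [← intervalIntegral.integral_add_adjacent_intervals
        (hcont.intervalIntegrable a t) (hcont.intervalIntegrable t b)]
      have hcong1 : Set.EqOn (fun s => α ^ (max s t + s + t) - (1/3) * α ^ (3 * max s t))
          (fun s => α ^ (s + 2 * t) - 1/3 * α ^ (3 * t)) (Set.uIcc a t) := by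
        intro s hs
        rw [Set.uIcc_of_le hat.le] at hs
        have : max s t = t := max_eq_right hs.2
        simp only [this]
        have h : t + s + t = s + 2 * t := by ring
        rw [h]
      have hcong2 : Set.EqOn (fun s => α ^ (max s t + s + t) - (1/3) * α ^ (3 * max s t))
          (fun s => α ^ (2 * s + t) - 1/3 * α ^ (3 * s)) (Set.uIcc t b) := by
        intro s hs
        rw [Set.uIcc_of_le htb] at hs
        have : max s t = s := max_eq_left hs.1
        simp only [this]
        have h : s + s + t = 2 * s + t := by ring
        rw [h]
      rw [intervalIntegral.integral_congr hcong1, intervalIntegral.integral_congr hcong2,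
        int1 α hα0 hα1 t a t, int2 α hα0 hα1 t t b]
      ring
    · -- b ≤ t; η = b; on [a,b], max s t = t
      have hη : min (max t a) b = b := by rw [max_eq_left hat.le, min_eq_right hbt]
      rw [hη]
      have hcong : Set.EqOn (fun s => α ^ (max s t + s + t) - (1/3) * α ^ (3 * max s t))
          (fun s => α ^ (s + 2 * t) - 1/3 * α ^ (3 * t)) (Set.uIcc a b) := by
        intro s hs
        rw [Set.uIcc_of_le hab] at hs
        have : max s t = t := max_eq_right (hs.2.trans hbt)
        simp only [this]
        have h : t + s + t = s + 2 * t := by ring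
        rw [h]
      rw [intervalIntegral.integral_congr hcong, int1 α hα0 hα1 t a b]
      ring
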